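/- For all integers m ≥ 1, n ≥ 1 and every h with 0 ≤ h ≤ m−1, det(A′_n − t_{h,m}·I_n) = 2·T_n(1 + 2·cos²((m−h)π/(2m+1))), where t_{h,m} = 2·cos((2h+1)π/(2m+1)). -/

import Mathlib

open Real Polynomial

/-- The `n × n` matrix `A′_n`: all diagonal entries `4`, entry `-1` at every position
`(h,k)` with `|h-k| = 1` except at position `(n, n-1)` (the last row, next-to-last
column), where the entry is `-2`, and `0` elsewhere. -/
def matA' (n : ℕ) : Matrix (Fin n) (Fin n) ℝ :=
  Matrix.of fun h k =>
    if h = k then 4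
    else if (h : ℕ) = n - 1 ∧ (k : ℕ) + 2 = n then -2
    else if |(h : ℤ) - (k : ℤ)| = 1 then -1 else 0

noncomputable def Dm (t : ℝ) (n : ℕ) : ℝ :=
  Matrix.det (matA' n - t • (1 : Matrix (Fin n) (Fin n) ℝ))

lemma Dm_one (t : ℝ) : Dm t 1 = 4 - t := by
  simp [Dm, Matrix.det_fin_one, matA', Matrix.one_apply]

lemma Dm_two (t : ℝ) : Dm t 2 = (4 - t)^2 - 2 := by
  simp [Dm, Matrix.det_fin_two, matA', Matrix.one_apply]
  ring

lemma matM_apply (t : ℝ) (n : ℕ) (i j : Fin n) :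
    (matA' n - t • (1 : Matrix (Fin n) (Fin n) ℝ)) i j =
      if (i:ℕ) = (j:ℕ) then 4 - t
      else if (i:ℕ) = n - 1 ∧ (j:ℕ) + 2 = n then -2
      else if |(i:ℤ) - (j:ℤ)| = 1 then -1 else 0 := by
  simp only [Matrix.sub_apply, Matrix.smul_apply, Matrix.one_apply, matA',
    Matrix.of_apply, Fin.ext_iff]
  split_ifs <;> simp_all <;> omega

lemma Dm_rec (t : ℝ) (k : ℕ) : Dm t (k+3) = (4 - t) * Dm t (k+2) - Dm t (k+1) := by
  set M := matA' (k+3) - t • (1 : Matrix (Fin (k+3)) (Fin (k+3)) ℝ) with hM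
  have habs : ∀ a b : ℤ, |a - b| = 1 ↔ (a - b = 1 ∨ a - b = -1) := fun a b =>
    abs_eq (by norm_num)
  have hMe : ∀ i j : Fin (k+3), M i j =
      if (i:ℕ) = (j:ℕ) then 4 - t
      else if (i:ℕ) = k + 2 ∧ (j:ℕ) + 2 = k + 3 then -2
      else if |(i:ℤ) - (j:ℤ)| = 1 then -1 else 0 := fun i j => matM_apply t (k+3) i j
  -- submatrix facts
  have sub00 : M.submatrix Fin.succ Fin.succ
      = matA' (k+2) - t • (1 : Matrix (Fin (k+2)) (Fin (k+2)) ℝ) := by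
    ext i j
    have hi := i.isLt; have hj := j.isLt
    rw [Matrix.submatrix_apply, hMe, matM_apply]
    simp only [Fin.val_succ, habs]
    push_cast
    split_ifs <;> first | rfl | omega | (rcases ‹_ ∨ _› with h9|h9 <;> omega) | simp_all
  -- column map for succAbove 1
  have hsa0 : (1 : Fin (k+3)).succAbove 0 = 0 := by
    rw [Fin.succAbove_of_castSucc_lt]
    · rfl
    · simp [Fin.lt_def]
  have hsas : ∀ j : Fin (k+1), (1 : Fin (k+3)).succAbove j.succ = j.succ.succ := by
    intro j
    rw [Fin.succAbove_of_le_castSucc]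
    simp [Fin.le_def]
  set N := M.submatrix Fin.succ ((1 : Fin (k+3)).succAbove) with hN
  have sub11 : N.submatrix Fin.succ Fin.succ
      = matA' (k+1) - t • (1 : Matrix (Fin (k+1)) (Fin (k+1)) ℝ) := by
    ext i j
    have hi := i.isLt; have hj := j.isLt
    rw [Matrix.submatrix_apply, hN, Matrix.submatrix_apply, hsas, hMe, matM_apply]
    simp only [Fin.val_succ, habs]
    push_cast
    split_ifs <;> first | rfl | omega | (rcases ‹_ ∨ _› with h9|h9 <;> omega) | simp_all
  have hdetN : N.det = - Dm t (k+1) := by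
    rw [Matrix.det_succ_column_zero, Fin.sum_univ_succ]
    have h1 : ∀ i : Fin (k+1), N i.succ 0 = 0 := by
      intro i
      rw [hN, Matrix.submatrix_apply, hsa0, hMe]
      have hi := i.isLt
      simp only [Fin.val_succ, Fin.val_zero, habs]
      push_cast
      split_ifs <;> first | rfl | omega | (simp_all; done) | (rcases ‹_ ∨ _› with h9|h9 <;> omega) | simp_all
    have h2 : N 0 0 = -1 := by
      rw [hN, Matrix.submatrix_apply, hsa0, hMe]
      norm_num
    simp only [h1, h2, mul_zero, zero_mul, mul_one, Finset.sum_const_zero, add_zero,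
      Fin.val_zero, pow_zero, one_mul, Fin.succAbove_zero, sub11, Dm]
    ring
  -- main expansion
  rw [show Dm t (k+3) = M.det from rfl, Matrix.det_succ_row_zero,
    Fin.sum_univ_succ, Fin.sum_univ_succ]
  have hz : ∀ j : Fin (k+1), M 0 j.succ.succ = 0 := by
    intro j
    rw [hMe]
    have hj := j.isLt
    simp only [Fin.val_succ, Fin.val_zero, habs]
    push_cast
    split_ifs <;> first | rfl | omega | (simp_all; done) | (rcases ‹_ ∨ _› with h9|h9 <;> omega) | simp_all
  have h00 : M 0 0 = 4 - t := by rw [hMe]; norm_num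
  have h01 : M 0 (0 : Fin (k+2)).succ = -1 := by
    rw [hMe]
    have : ((0 : Fin (k+2)).succ : ℕ) = 1 := rfl
    rw [this]
    norm_num
  simp only [hz, h00, h01, mul_zero, zero_mul, mul_one, Finset.sum_const_zero, add_zero,
    Fin.val_zero, pow_zero, one_mul, Fin.succAbove_zero, sub00]
  have : (0 : Fin (k+2)).succ = (1 : Fin (k+3)) := rfl
  rw [this, show ((1 : Fin (k+3)) : ℕ) = 1 from rfl, ← hN, hdetN]
  rw [show Dm t (k+2) = (matA' (k+2) - t • (1 : Matrix (Fin (k+2)) (Fin (k+2)) ℝ)).det from rfl]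
  ring

lemma Dm_eq (t : ℝ) (n : ℕ) :
    Dm t (n+1) = 2 * (Polynomial.Chebyshev.T ℝ (n+1 : ℕ)).eval ((4-t)/2) := by
  induction n using Nat.strong_induction_on with
  | _ n ih =>
    match n with
    | 0 => simp [Dm_one, Polynomial.Chebyshev.T_one]; ring
    | 1 =>
      rw [Dm_two]
      norm_num [Polynomial.Chebyshev.T_two]
      ring
    | (n+2) =>
      rw [Dm_rec, ih (n+1) (by omega), ih n (by omega)]
      have hc : ((n+2+1 : ℕ) : ℤ) = ((n:ℤ)+1) + 2 := by push_cast; ring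
      rw [hc, Polynomial.Chebyshev.T_add_two]
      have h1 : ((n+1+1 : ℕ) : ℤ) = ((n:ℤ)+1) + 1 := by push_cast; ring
      have h2 : ((n+1 : ℕ) : ℤ) = ((n:ℤ)+1) := by push_cast; ring
      rw [h1, h2]
      simp only [Polynomial.eval_sub, Polynomial.eval_mul, Polynomial.eval_ofNat,
        Polynomial.eval_X]
      ring

theorem charpoly_matA'_value_eq_chebyshevT (m n : ℕ) (hm : 1 ≤ m) (hn : 1 ≤ n)
    (h : ℕ) (hh : h ≤ m - 1) :
    Matrix.det
        (matA' n - (2 * Real.cos ((2 * h + 1) * π / (2 * m + 1))) •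
          (1 : Matrix (Fin n) (Fin n) ℝ)) =
      2 * (Polynomial.Chebyshev.T ℝ n).eval
        (1 + 2 * Real.cos (((m : ℝ) - h) * π / (2 * m + 1)) ^ 2) := by
  obtain ⟨n', rfl⟩ : ∃ n', n = n' + 1 := ⟨n - 1, by omega⟩
  set t := 2 * Real.cos ((2 * h + 1) * π / (2 * m + 1)) with ht
  have key : Matrix.det (matA' (n'+1) - t • (1 : Matrix (Fin (n'+1)) (Fin (n'+1)) ℝ))
      = 2 * (Polynomial.Chebyshev.T ℝ (n'+1 : ℕ)).eval ((4-t)/2) := Dm_eq t n'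
  rw [key]
  congr 1
  congr 1
  -- (4 - t)/2 = 1 + 2 cos^2 φ
  have hm1 : (2*(m:ℝ)+1) ≠ 0 := by positivity
  have hang : (2 * (h:ℝ) + 1) * π / (2 * m + 1)
      = π - 2 * (((m : ℝ) - h) * π / (2 * m + 1)) := by
    field_simp
    ring
  rw [ht, hang, Real.cos_pi_sub, Real.cos_two_mul]
  ring
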